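/- Let d ≥ 1 be an integer. There exists a constant K > 0, depending only on d, such that for every real L ≥ 1 and every r ∈ (0, π/2], one has ∫₀^r φ^{2d−1} · ( ∫_{r−φ}^{π/2} θ^{2d−1} · exp(−L·θ²/2) dθ ) dφ ≤ K · L^{−d−1/2}. -/

import Mathlib

open Real MeasureTheory intervalIntegral

lemma my_pow_mul_exp_le (n : ℕ) {x : ℝ} (hx : 0 ≤ x) :
    x ^ n * Real.exp (-(x ^ 2) / 8) ≤ n.factorial * Real.exp 2 := by
  have h1 : x ^ n ≤ n.factorial * Real.exp x := by
    have := Real.pow_div_factorial_le_exp x hx n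
    have hf : (0:ℝ) < n.factorial := by positivity
    rw [div_le_iff₀ hf] at this
    linarith [this]
  calc x ^ n * Real.exp (-(x ^ 2) / 8)
      ≤ (n.factorial * Real.exp x) * Real.exp (-(x ^ 2) / 8) := by
        apply mul_le_mul_of_nonneg_right h1 (Real.exp_nonneg _)
    _ = n.factorial * Real.exp (x + -(x ^ 2) / 8) := by rw [Real.exp_add]; ring
    _ ≤ n.factorial * Real.exp 2 := by
        have : x + -(x ^ 2) / 8 ≤ 2 := by nlinarith [sq_nonneg (x - 4)]
        have hf : (0:ℝ) ≤ n.factorial := by positivity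
        exact mul_le_mul_of_nonneg_left (Real.exp_le_exp.2 this) hf

lemma my_integral_exp_affine (c e a b : ℝ) (hc : c ≠ 0) :
    ∫ x in a..b, Real.exp (c * x + e)
      = (Real.exp (c * b + e) - Real.exp (c * a + e)) / c := by
  have h : ∀ x : ℝ, HasDerivAt (fun y => Real.exp (c * y + e) / c)
      (Real.exp (c * x + e)) x := by
    intro x
    have h1 : HasDerivAt (fun y : ℝ => c * y + e) c x := by
      simpa using ((hasDerivAt_id x).const_mul c).add_const e
    have h2 := (Real.hasDerivAt_exp (c * x + e)).comp x h1
    have h3 := h2.div_const c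
    simpa [mul_div_cancel_right₀ _ hc] using h3
  rw [intervalIntegral.integral_eq_sub_of_hasDerivAt (fun x _ => h x)
    ((Real.continuous_exp.comp ((continuous_const.mul continuous_id).add
      continuous_const)).intervalIntegrable a b)]
  ring

set_option maxHeartbeats 2000000 in
theorem projective_ensemble_gaussian_integral (d : ℕ) (hd : 1 ≤ d) :
    ∃ K > (0 : ℝ), ∀ L : ℝ, 1 ≤ L → ∀ r : ℝ, 0 < r → r ≤ π / 2 →
      (∫ φ in (0 : ℝ)..r, φ ^ (2 * d - 1) *
          ∫ θ in (r - φ)..(π / 2), θ ^ (2 * d - 1) * Real.exp (-L * θ ^ 2 / 2))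
        ≤ K * L ^ (-(d : ℝ) - 1 / 2) := by
  set n : ℕ := 2 * d - 1 with hn
  have hn2 : n + 2 = 2 * d + 1 := by omega
  refine ⟨(π/2)^n * n.factorial * Real.exp 5, by positivity, ?_⟩
  intro L hL r hr0 hrπ
  have hπ : (0:ℝ) < π / 2 := by positivity
  have hL0 : (0:ℝ) < L := lt_of_lt_of_le one_pos hL
  set s : ℝ := Real.sqrt L with hs
  have hs0 : 0 < s := Real.sqrt_pos.2 hL0
  have hsL : s ^ 2 = L := Real.sq_sqrt hL0.le
  have hrw : L ^ (-(d : ℝ) - 1 / 2) = (s ^ (2 * d + 1))⁻¹ := by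
    rw [show (-(d : ℝ) - 1/2) = -((1/2) * ((2*d+1 : ℕ) : ℝ)) by push_cast; ring,
      Real.rpow_neg hL0.le, Real.rpow_mul hL0.le, Real.rpow_natCast, hs,
      Real.sqrt_eq_rpow]
  rw [hrw]
  clear_value s
  set g : ℝ → ℝ := fun θ => θ ^ n * Real.exp (-L * θ ^ 2 / 2) with hg
  have hgc : Continuous g := by
    apply Continuous.mul (continuous_pow n)
    exact Real.continuous_exp.comp
      (((continuous_const.mul (continuous_pow 2)).div_const 2))
  set C₂ : ℝ := n.factorial * Real.exp 2 * Real.exp 2 / s ^ (n+1) with hC₂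
  have hC₂0 : 0 < C₂ := by positivity
  -- inner integral bound
  have hinner : ∀ a : ℝ, 0 ≤ a → a ≤ π/2 →
      (∫ θ in a..(π/2), g θ) ≤ C₂ * Real.exp (-L * a ^ 2 / 4) := by
    intro a ha haπ
    have hpt : ∀ θ ∈ Set.Icc a (π/2), g θ ≤
        (n.factorial * Real.exp 2 / s ^ n * Real.exp (-L * a ^ 2 / 4))
          * Real.exp ((-s) * θ + 2) := by
      intro θ hθ
      have hθa : a ≤ θ := hθ.1
      have hθ0 : 0 ≤ θ := le_trans ha hθ.1
      have hLθ : (s * θ) ^ 2 = L * θ ^ 2 := by rw [mul_pow, hsL]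
      have key1 : θ ^ n * Real.exp (-((s*θ) ^ 2) / 8)
          ≤ n.factorial * Real.exp 2 / s ^ n := by
        have h0 := my_pow_mul_exp_le n (x := s * θ) (by positivity)
        rw [mul_pow] at h0
        rw [le_div_iff₀ (by positivity : (0:ℝ) < s ^ n)]
        nlinarith [Real.exp_nonneg (-((s*θ)^2)/8)]
      have key2 : Real.exp (-((s*θ) ^ 2) / 8) ≤ Real.exp ((-s) * θ + 2) :=
        Real.exp_le_exp.2 (by nlinarith [sq_nonneg (s * θ - 4)])
      have ha2 : a ^ 2 ≤ θ ^ 2 := by nlinarith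
      have key3 : Real.exp (-L * θ ^ 2 / 4) ≤ Real.exp (-L * a ^ 2 / 4) :=
        Real.exp_le_exp.2 (by nlinarith [mul_le_mul_of_nonneg_left ha2 hL0.le])
      have hsplit : Real.exp (-L * θ ^ 2 / 2) =
          Real.exp (-((s*θ) ^ 2) / 8) * Real.exp (-((s*θ) ^ 2) / 8)
            * Real.exp (-L * θ ^ 2 / 4) := by
        rw [← Real.exp_add, ← Real.exp_add]
        congr 1
        rw [hLθ]; ring
      calc g θ = (θ ^ n * Real.exp (-((s*θ)^2)/8)) * Real.exp (-((s*θ)^2)/8)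
            * Real.exp (-L * θ ^ 2 / 4) := by rw [hg]; simp only; rw [hsplit]; ring
        _ ≤ (n.factorial * Real.exp 2 / s ^ n) * Real.exp ((-s) * θ + 2)
            * Real.exp (-L * a ^ 2 / 4) := by
            apply mul_le_mul _ key3 (Real.exp_nonneg _) (by positivity)
            exact mul_le_mul key1 key2 (Real.exp_nonneg _) (by positivity)
        _ = (n.factorial * Real.exp 2 / s ^ n * Real.exp (-L * a ^ 2 / 4))
            * Real.exp ((-s) * θ + 2) := by ring
    have hmono := intervalIntegral.integral_mono_on (μ := volume) haπ
      (hgc.intervalIntegrable _ _)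
      ((continuous_const.mul (Real.continuous_exp.comp
        ((continuous_const.mul continuous_id).add continuous_const))).intervalIntegrable _ _)
      hpt
    simp only [Function.comp_def, id_eq, Pi.mul_apply, Pi.add_apply] at hmono
    rw [intervalIntegral.integral_const_mul,
      my_integral_exp_affine (-s) 2 a (π/2) (by linarith)] at hmono
    refine le_trans hmono ?_
    have hval : (Real.exp ((-s) * (π/2) + 2) - Real.exp ((-s) * a + 2)) / (-s)
        ≤ Real.exp 2 / s := by
      rw [div_neg, ← neg_div, neg_sub]
      apply (div_le_div_iff_of_pos_right hs0).2
      have hb : Real.exp ((-s) * a + 2) ≤ Real.exp 2 :=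
        Real.exp_le_exp.2 (by nlinarith)
      nlinarith [Real.exp_pos ((-s) * (π/2) + 2)]
    calc (n.factorial * Real.exp 2 / s ^ n * Real.exp (-L * a ^ 2 / 4))
          * ((Real.exp ((-s) * (π/2) + 2) - Real.exp ((-s) * a + 2)) / (-s))
        ≤ (n.factorial * Real.exp 2 / s ^ n * Real.exp (-L * a ^ 2 / 4))
          * (Real.exp 2 / s) := mul_le_mul_of_nonneg_left hval (by positivity)
      _ = C₂ * Real.exp (-L * a ^ 2 / 4) := by
          rw [hC₂]; field_simp; ring
  -- continuity of the inner integral as a function of the lower endpoint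
  have hgint : ∀ a b : ℝ, IntervalIntegrable g volume a b :=
    fun a b => hgc.intervalIntegrable a b
  set F : ℝ → ℝ := fun x => ∫ t in (0:ℝ)..x, g t with hF
  have hFc : Continuous F := intervalIntegral.continuous_primitive hgint 0
  have hIeq : ∀ a : ℝ, (∫ θ in a..(π/2), g θ) = F (π/2) - F a := by
    intro a
    have := intervalIntegral.integral_add_adjacent_intervals (hgint 0 a) (hgint a (π/2))
    rw [hF]; simp only
    linarith
  have hIc : Continuous fun a : ℝ => ∫ θ in a..(π/2), g θ := by
    have heq : (fun a : ℝ => ∫ θ in a..(π/2), g θ) = fun a => F (π/2) - F a :=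
      funext hIeq
    rw [heq]
    exact continuous_const.sub hFc
  have houtc : Continuous fun φ : ℝ => φ ^ n * ∫ θ in (r - φ)..(π/2), g θ :=
    (continuous_pow n).mul (hIc.comp (continuous_const.sub continuous_id))
  set C₃ : ℝ := (π/2)^n * C₂ with hC₃
  have hpt2 : ∀ φ ∈ Set.Icc (0:ℝ) r, φ ^ n * (∫ θ in (r-φ)..(π/2), g θ)
      ≤ C₃ * Real.exp (s * φ + (1 - s * r)) := by
    intro φ hφ
    have hφ0 : 0 ≤ φ := hφ.1
    have hφr : φ ≤ r := hφ.2
    have h1 : 0 ≤ r - φ := by linarith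
    have h2 : r - φ ≤ π/2 := by linarith
    have hin := hinner (r - φ) h1 h2
    have hst : (s * (r - φ)) ^ 2 = L * (r - φ) ^ 2 := by rw [mul_pow, hsL]
    have hexp : Real.exp (-L * (r-φ)^2 / 4) ≤ Real.exp (s * φ + (1 - s * r)) := by
      apply Real.exp_le_exp.2
      have hu1 : s*(r-φ) - 1 ≤ (s*(r-φ))^2/4 := by nlinarith [sq_nonneg (s*(r-φ) - 2)]
      nlinarith [hu1, hst]
    calc φ^n * (∫ θ in (r-φ)..(π/2), g θ)
        ≤ φ^n * (C₂ * Real.exp (-L * (r-φ)^2 / 4)) :=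
          mul_le_mul_of_nonneg_left hin (by positivity)
      _ ≤ (π/2)^n * (C₂ * Real.exp (s * φ + (1 - s * r))) := by
          apply mul_le_mul (pow_le_pow_left₀ hφ0 (by linarith) n)
            (mul_le_mul_of_nonneg_left hexp hC₂0.le) (by positivity) (by positivity)
      _ = C₃ * Real.exp (s * φ + (1 - s * r)) := by rw [hC₃]; ring
  have hmono2 := intervalIntegral.integral_mono_on (μ := volume) hr0.le
    (houtc.intervalIntegrable _ _)
    ((continuous_const.mul (Real.continuous_exp.comp
      ((continuous_const.mul continuous_id).add continuous_const))).intervalIntegrable _ _)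
    hpt2
  simp only [Function.comp_def, id_eq, Pi.mul_apply, Pi.add_apply] at hmono2
  rw [intervalIntegral.integral_const_mul,
    my_integral_exp_affine s (1 - s*r) 0 r hs0.ne'] at hmono2
  refine le_trans hmono2 ?_
  have hnum : (Real.exp (s*r + (1 - s*r)) - Real.exp (s*0 + (1 - s*r)))/s
      ≤ Real.exp 1 / s := by
    apply (div_le_div_iff_of_pos_right hs0).2
    have h1 : s*r + (1 - s*r) = 1 := by ring
    rw [h1]
    nlinarith [Real.exp_pos (s*0 + (1 - s*r))]
  calc C₃ * ((Real.exp (s*r + (1 - s*r)) - Real.exp (s*0 + (1 - s*r)))/s)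
      ≤ C₃ * (Real.exp 1 / s) := mul_le_mul_of_nonneg_left hnum (by positivity)
    _ = (π/2)^n * n.factorial * Real.exp 5 * (s ^ (2*d+1))⁻¹ := by
        rw [hC₃, hC₂, ← hn2]
        have he : Real.exp 2 * Real.exp 2 * Real.exp 1 = Real.exp 5 := by
          rw [← Real.exp_add, ← Real.exp_add]; norm_num
        rw [← he]
        field_simp
        ring
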